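/- Let P be the formal power series in three variables x, y, z over the rationals whose coefficient of x^a y^b z^c equals 1 if a, b, c are positive integers with min(a,b,c) = 1 and max(a,b,c) ≥ 2, and equals 0 otherwise. Then (P + xyz) · ((1-x)(1-y)(1-z) + xyz) = xyz · (1 + P) as formal power series; equivalently, (P + xyz)/(1 + P) = xyz / ((1-x)(1-y)(1-z) + xyz). -/

import Mathlib

open MvPowerSeries

noncomputable def F (a b c : ℕ) : ℚ :=
  if (1 ≤ a ∧ 1 ≤ b ∧ 1 ≤ c) ∧ (a = 1 ∨ b = 1 ∨ c = 1) then 1 else 0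

lemma nat_cases (a : ℕ) : a = 0 ∨ a = 1 ∨ a = 2 ∨ ∃ n, a = n + 3 := by
  rcases Nat.lt_or_ge a 3 with h | h
  · omega
  · exact Or.inr (Or.inr (Or.inr ⟨a - 3, by omega⟩))

lemma arith (a b c : ℕ) :
    F a b c - F (a-1) b c - F a (b-1) c - F a b (c-1)
      + F (a-1) (b-1) c + F (a-1) b (c-1) + F a (b-1) (c-1)
      - F (a-1) (b-1) (c-1)
    = (if a = 1 ∧ b = 1 ∧ c = 1 then 1 else 0)
      - (if a = 2 ∧ b = 2 ∧ c = 2 then (1:ℚ) else 0) := by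
  rcases nat_cases a with rfl|rfl|rfl|⟨a,rfl⟩ <;>
  rcases nat_cases b with rfl|rfl|rfl|⟨b,rfl⟩ <;>
  rcases nat_cases c with rfl|rfl|rfl|⟨c,rfl⟩ <;>
  simp only [F, show ∀ n:ℕ, n+3-1 = n+2 from fun _ => rfl,
    show ∀ n:ℕ, (1 ≤ n+3) = True from fun n => eq_true (by omega),
    show ∀ n:ℕ, (1 ≤ n+2) = True from fun n => eq_true (by omega),
    show ∀ n:ℕ, (n+3 = 1) = False from fun n => eq_false (by omega),
    show ∀ n:ℕ, (n+2 = 1) = False from fun n => eq_false (by omega),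
    show ∀ n:ℕ, (n+3 = 2) = False from fun n => eq_false (by omega)] <;>
  norm_num

lemma forall3 (p : Fin 3 → Prop) : (∀ a : Fin 3, p a) ↔ p 0 ∧ p 1 ∧ p 2 := by
  constructor
  · exact fun h => ⟨h 0, h 1, h 2⟩
  · rintro ⟨h0, h1, h2⟩ a
    fin_cases a <;> assumption

lemma exists3 (p : Fin 3 → Prop) : (∃ a : Fin 3, p a) ↔ p 0 ∨ p 1 ∨ p 2 := by
  constructor
  · rintro ⟨a, ha⟩
    fin_cases a
    · exact Or.inl ha
    · exact Or.inr (Or.inl ha)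
    · exact Or.inr (Or.inr ha)
  · rintro (h | h | h) <;> exact ⟨_, h⟩

noncomputable def ee (i : Fin 3) : Fin 3 →₀ ℕ := Finsupp.single i 1

lemma le3 (n d : Fin 3 →₀ ℕ) : n ≤ d ↔ n 0 ≤ d 0 ∧ n 1 ≤ d 1 ∧ n 2 ≤ d 2 := by
  rw [Finsupp.le_def, forall3]

lemma eq3 (n d : Fin 3 →₀ ℕ) : d = n ↔ d 0 = n 0 ∧ d 1 = n 1 ∧ d 2 = n 2 := by
  rw [Finsupp.ext_iff, forall3]

lemma hXmono (i : Fin 3) : (X i : MvPowerSeries (Fin 3) ℚ) = monomial (ee i) 1 := rfl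

lemma F_zero_left (b c : ℕ) : F 0 b c = 0 := by simp [F]

/-- The generating function identity for homology facets:
`(P + xyz)·((1-x)(1-y)(1-z) + xyz) = xyz·(1 + P)`, i.e.
`(P + xyz)/(1 + P) = xyz/((1-x)(1-y)(1-z) + xyz)`. -/
theorem homology_facet_generating_function (P : MvPowerSeries (Fin 3) ℚ)
    (hP : ∀ d : Fin 3 →₀ ℕ,
      MvPowerSeries.coeff d P =
        if (∀ a : Fin 3, 1 ≤ d a) ∧ (∃ a : Fin 3, d a = 1) ∧ (∃ a : Fin 3, 2 ≤ d a)
        then 1 else 0) :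
    (P + X 0 * X 1 * X 2) * ((1 - X 0) * (1 - X 1) * (1 - X 2) + X 0 * X 1 * X 2) =
      X 0 * X 1 * X 2 * (1 + P) := by
  set M : MvPowerSeries (Fin 3) ℚ := X 0 * X 1 * X 2 with hM
  have hMmono : M = monomial (ee 0 + ee 1 + ee 2) 1 := by
    rw [hM, hXmono, hXmono, hXmono, monomial_mul_monomial, monomial_mul_monomial, one_mul, one_mul]
  -- coefficients of S = P + M
  have hS : ∀ d : Fin 3 →₀ ℕ, coeff d (P + M) = F (d 0) (d 1) (d 2) := by
    intro d
    rw [map_add, hP d, hMmono, coeff_monomial, F]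
    have h1 := forall3 (fun a => 1 ≤ d a)
    have h2 := exists3 (fun a => d a = 1)
    have h3 := exists3 (fun a => 2 ≤ d a)
    have h4 : d = ee 0 + ee 1 + ee 2 ↔ d 0 = 1 ∧ d 1 = 1 ∧ d 2 = 1 := by
      rw [eq3]
      simp [ee, Finsupp.single_apply]
    simp only [h1, h2, h3, h4]
    split_ifs <;> first | omega | norm_num
  -- key coefficient computation lemma
  have keyterm : ∀ (d n : Fin 3 →₀ ℕ),
      coeff d ((P + M) * monomial n 1)
        = if n ≤ d then F (d 0 - n 0) (d 1 - n 1) (d 2 - n 2) else 0 := by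
    intro d n
    rw [coeff_mul_monomial, hS]
    simp [Finsupp.tsub_apply]
  -- the key identity
  have key : (P + M) * ((1 - X 0) * (1 - X 1) * (1 - X 2)) = M - M * M := by
    have expand : (P + M) * ((1 - X 0) * (1 - X 1) * (1 - X 2)) =
        (P + M) - (P + M) * X 0 - (P + M) * X 1 - (P + M) * X 2
        + (P + M) * (X 0 * X 1) + (P + M) * (X 0 * X 2) + (P + M) * (X 1 * X 2)
        - (P + M) * (X 0 * X 1 * X 2) := by ring
    have hMM : M * M = monomial ((ee 0 + ee 1 + ee 2) + (ee 0 + ee 1 + ee 2)) 1 := by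
      rw [hMmono, monomial_mul_monomial, one_mul]
    have hX01 : (X 0 * X 1 : MvPowerSeries (Fin 3) ℚ) = monomial (ee 0 + ee 1) 1 := by
      rw [hXmono, hXmono, monomial_mul_monomial, one_mul]
    have hX02 : (X 0 * X 2 : MvPowerSeries (Fin 3) ℚ) = monomial (ee 0 + ee 2) 1 := by
      rw [hXmono, hXmono, monomial_mul_monomial, one_mul]
    have hX12 : (X 1 * X 2 : MvPowerSeries (Fin 3) ℚ) = monomial (ee 1 + ee 2) 1 := by
      rw [hXmono, hXmono, monomial_mul_monomial, one_mul]
    have hX012 : (X 0 * X 1 * X 2 : MvPowerSeries (Fin 3) ℚ) =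
        monomial (ee 0 + ee 1 + ee 2) 1 := by
      rw [hXmono, hXmono, hXmono, monomial_mul_monomial, monomial_mul_monomial, one_mul, one_mul]
    rw [expand]
    ext d
    rw [map_sub, map_add, map_add, map_add, map_sub, map_sub, map_sub, map_sub,
      hX012, hX01, hX02, hX12, hXmono 0, hXmono 1, hXmono 2,
      keyterm, keyterm, keyterm, keyterm, keyterm, keyterm, keyterm,
      hS, hMM, hMmono, coeff_monomial, coeff_monomial]
    -- evaluate coordinates of the exponents
    have c00 : (ee 0) 0 = 1 := by simp [ee]
    have c01 : (ee 0) 1 = 0 := by simp [ee, Finsupp.single_apply]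
    have c02 : (ee 0) 2 = 0 := by simp [ee, Finsupp.single_apply]
    have c10 : (ee 1) 0 = 0 := by simp [ee, Finsupp.single_apply]
    have c11 : (ee 1) 1 = 1 := by simp [ee]
    have c12 : (ee 1) 2 = 0 := by simp [ee, Finsupp.single_apply]
    have c20 : (ee 2) 0 = 0 := by simp [ee, Finsupp.single_apply]
    have c21 : (ee 2) 1 = 0 := by simp [ee, Finsupp.single_apply]
    have c22 : (ee 2) 2 = 1 := by simp [ee]
    have hE1 : d = ee 0 + ee 1 + ee 2 ↔ d 0 = 1 ∧ d 1 = 1 ∧ d 2 = 1 := by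
      rw [eq3]; simp [Finsupp.add_apply, c00, c01, c02, c10, c11, c12, c20, c21, c22]
    have hE2 : d = (ee 0 + ee 1 + ee 2) + (ee 0 + ee 1 + ee 2) ↔
        d 0 = 2 ∧ d 1 = 2 ∧ d 2 = 2 := by
      rw [eq3]; simp [Finsupp.add_apply, c00, c01, c02, c10, c11, c12, c20, c21, c22]
    simp only [le3, Finsupp.add_apply, c00, c01, c02, c10, c11, c12, c20, c21, c22,
      hE1, hE2, Nat.zero_le, true_and, and_true, Nat.sub_zero,
      zero_add, add_zero]
    -- drop the guards
    have drop : ∀ (x : Prop) [Decidable x] (u v w : ℕ),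
        ((¬ x) → u = 0 ∨ v = 0 ∨ w = 0) →
        (if x then F u v w else 0) = F u v w := by
      intro x _ u v w h
      split_ifs with hx
      · rfl
      · rcases h hx with rfl | rfl | rfl <;> simp [F]
    rw [drop _ _ _ _ (fun h => Or.inl (by omega)),
        drop _ _ _ _ (fun h => Or.inr (Or.inl (by omega))),
        drop _ _ _ _ (fun h => Or.inr (Or.inr (by omega))),
        drop _ _ _ _ (fun h => by omega),
        drop _ _ _ _ (fun h => by omega),
        drop _ _ _ _ (fun h => by omega),
        drop _ _ _ _ (fun h => by omega)]
    exact arith (d 0) (d 1) (d 2)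
  calc (P + M) * ((1 - X 0) * (1 - X 1) * (1 - X 2) + M)
      = (P + M) * ((1 - X 0) * (1 - X 1) * (1 - X 2)) + (P + M) * M := by ring
    _ = (M - M * M) + (P + M) * M := by rw [key]
    _ = M * (1 + P) := by ring
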